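/- arXiv:1411.3223 — 7 statements merged into one kernel-verified Lean document; each statement's English description precedes it below -/
import Mathlib

section
/- Let f : ℚ/ℤ → ℚ/ℤ be a homomorphism of additive groups whose kernel is finite, and let m be the cardinality of the kernel of f. Then m ≥ 1 and there exists an automorphism ξ of the group ℚ/ℤ such that f(x) = m·ξ(x) for every x ∈ ℚ/ℤ (i.e. f is the composition of an automorphism with multiplication by m); in particular f is surjective. -/
private lemma qz_smul_surj {m : ℕ} (hm : 1 ≤ m) :
    Function.Surjective (fun x : AddCircle (1 : ℚ) => m • x) := by
  intro y
  refine ⟨DivisibleBy.div y (m : ℤ), ?_⟩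
  have := DivisibleBy.div_cancel y (n := (m : ℤ)) (by exact_mod_cast (by omega : m ≠ 0))
  simpa [natCast_zsmul] using this

private lemma qz_torsion (x : AddCircle (1 : ℚ)) : ∃ n : ℕ, 0 < n ∧ n • x = 0 := by
  induction x using QuotientAddGroup.induction_on with
  | H q =>
    refine ⟨q.den, q.pos, ?_⟩
    rw [← AddCircle.coe_nsmul, AddCircle.coe_eq_zero_iff]
    refine ⟨q.num, ?_⟩
    have hq : (q.num : ℚ) / (q.den : ℚ) = q := Rat.num_div_den q
    have hden : (q.den : ℚ) ≠ 0 := by exact_mod_cast q.den_nz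
    rw [div_eq_iff hden] at hq
    rw [zsmul_eq_mul, mul_one, nsmul_eq_mul, hq, mul_comm]
private lemma qz_torsion_finite {n : ℕ} (hn : 0 < n) :
    {x : AddCircle (1 : ℚ) | n • x = 0}.Finite := by
  haveI : Fact ((0:ℚ) < 1) := ⟨one_pos⟩
  have : {x : AddCircle (1 : ℚ) | n • x = 0} ⊆
      ⋃ d ∈ n.divisors, {x : AddCircle (1 : ℚ) | addOrderOf x = d} := by
    intro x hx
    have hdvd : addOrderOf x ∣ n := addOrderOf_dvd_of_nsmul_eq_zero hx
    exact Set.mem_biUnion (Nat.mem_divisors.mpr ⟨hdvd, hn.ne'⟩) rfl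
  refine Set.Finite.subset ?_ this
  refine Set.Finite.biUnion (Set.finite_mem_finset n.divisors) fun d hd => ?_
  exact AddCircle.finite_setOfPred_addOrderOf_eq (p := (1:ℚ)) (Nat.pos_of_mem_divisors hd)

private lemma qz_inj_surj (g : AddCircle (1 : ℚ) →+ AddCircle (1 : ℚ))
    (hg : Function.Injective g) : Function.Surjective g := by
  intro y
  obtain ⟨n, hn, hny⟩ := qz_torsion y
  set S : Set (AddCircle (1 : ℚ)) := {x | n • x = 0} with hS
  have hSfin := qz_torsion_finite hn
  have hsub : g '' S ⊆ S := by
    rintro _ ⟨x, hx, rfl⟩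
    show n • g x = 0
    rw [← map_nsmul, hx, map_zero]
  have hcard : S.ncard ≤ (g '' S).ncard := by
    rw [Set.ncard_image_of_injective S hg]
  have heq : g '' S = S := Set.eq_of_subset_of_ncard_le hsub hcard hSfin
  have hy : y ∈ g '' S := by rw [heq]; exact hny
  exact ⟨hy.choose, hy.choose_spec.2⟩

private lemma qz_torsion_card {n : ℕ} (hn : 0 < n) :
    {x : AddCircle (1 : ℚ) | n • x = 0}.ncard = n := by
  classical
  haveI : Fact ((0:ℚ) < 1) := ⟨one_pos⟩
  have hfin := qz_torsion_finite hn
  set T := hfin.toFinset with hT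
  have key : T.card = ∑ d ∈ n.divisors, (T.filter (fun x => addOrderOf x = d)).card := by
    refine Finset.card_eq_sum_card_fiberwise (fun x hx => ?_)
    rw [hT, Finset.mem_coe, Set.Finite.mem_toFinset] at hx
    exact Nat.mem_divisors.mpr ⟨addOrderOf_dvd_of_nsmul_eq_zero hx, hn.ne'⟩
  have fib : ∀ d ∈ n.divisors, (T.filter (fun x => addOrderOf x = d)).card = d.totient := by
    intro d hd
    have hsetfin : {x : AddCircle (1:ℚ) | addOrderOf x = d}.Finite :=
      AddCircle.finite_setOfPred_addOrderOf_eq (p := (1:ℚ)) (Nat.pos_of_mem_divisors hd)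
    have hTd : (T.filter fun x => addOrderOf x = d) = hsetfin.toFinset := by
      ext x
      simp only [Finset.mem_filter, Set.Finite.mem_toFinset, Set.mem_setOf_eq, hT]
      constructor
      · rintro ⟨-, h⟩; exact h
      · intro h
        refine ⟨?_, h⟩
        have hdx : d • x = 0 := h ▸ addOrderOf_nsmul_eq_zero x
        obtain ⟨c, hc⟩ := (Nat.mem_divisors.mp hd).1
        rw [hc, mul_comm, mul_smul, hdx, smul_zero]
    rw [hTd, ← Set.ncard_eq_toFinset_card _ hsetfin, ← Nat.card_coe_set_eq]
    exact AddCircle.card_addOrderOf_eq_totient (p := (1:ℚ))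
  rw [Set.ncard_eq_toFinset_card _ hfin, ← hT, key, Finset.sum_congr rfl fib]
  exact Nat.sum_totient n

/-- A homomorphism `f : ℚ/ℤ → ℚ/ℤ` with finite kernel of cardinality `m` is the
composition of an automorphism of `ℚ/ℤ` with multiplication by `m`; in particular
it is surjective. -/
theorem qz_endomorphism_classification
    (f : AddCircle (1 : ℚ) →+ AddCircle (1 : ℚ))
    (hker : ((f.ker : Set (AddCircle (1 : ℚ)))).Finite)
    (m : ℕ) (hm : m = Nat.card f.ker) :
    1 ≤ m ∧
    (∃ ξ : AddCircle (1 : ℚ) ≃+ AddCircle (1 : ℚ), ∀ x, f x = m • ξ x) ∧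
    Function.Surjective f := by
  haveI : Finite f.ker := hker.to_subtype
  have hm1 : 1 ≤ m := by rw [hm]; exact Nat.one_le_iff_ne_zero.mpr Nat.card_pos.ne'
  have hkill : ∀ x ∈ f.ker, m • x = 0 := by
    intro x hx
    have h2 : (m • (⟨x, hx⟩ : f.ker) : f.ker) = 0 := by
      rw [hm]; exact card_nsmul_eq_zero'
    have := congrArg (Subtype.val) h2
    simpa using this
  -- the kernel of f equals the m-torsion subgroup
  set Tm : Set (AddCircle (1 : ℚ)) := {x | m • x = 0} with hTm
  have hsub : (f.ker : Set (AddCircle (1 : ℚ))) ⊆ Tm := fun x hx => hkill x hx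
  have hkereq : (f.ker : Set (AddCircle (1 : ℚ))) = Tm := by
    refine Set.eq_of_subset_of_ncard_le hsub ?_ (qz_torsion_finite hm1)
    rw [qz_torsion_card hm1, ← Nat.card_coe_set_eq]
    exact le_of_eq hm
  -- multiplication by m
  let μ : AddCircle (1 : ℚ) →+ AddCircle (1 : ℚ) :=
    AddMonoidHom.mk' (fun x => m • x) (fun a b => smul_add m a b)
  have hμsurj : Function.Surjective μ := qz_smul_surj hm1
  have hμker : μ.ker ≤ f.ker := by
    intro x hx
    have h0 : x ∈ Tm := hx
    rw [← hkereq] at h0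
    exact h0
  set finv := Function.surjInv hμsurj with hfinv
  have hrinv : Function.RightInverse finv μ := Function.rightInverse_surjInv hμsurj
  set g := μ.liftOfRightInverse finv hrinv ⟨f, hμker⟩ with hgdef
  have hg : ∀ x, g (μ x) = f x := fun x =>
    μ.liftOfRightInverse_comp_apply finv hrinv ⟨f, hμker⟩ x
  have hginj : Function.Injective g := by
    rw [injective_iff_map_eq_zero]
    intro y hy
    obtain ⟨x, rfl⟩ := hμsurj y
    rw [hg] at hy
    have : x ∈ f.ker := hy
    exact hkill x this
  have hgsurj : Function.Surjective g := qz_inj_surj g hginj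
  refine ⟨hm1, ⟨AddEquiv.ofBijective g ⟨hginj, hgsurj⟩, fun x => ?_⟩, fun y => ?_⟩
  · have : f x = g (m • x) := (hg x).symm
    rw [this, map_nsmul]
    rfl
  · obtain ⟨z, hz⟩ := hgsurj y
    obtain ⟨x, hx⟩ := hμsurj z
    exact ⟨x, by rw [← hz, ← hx, hg x]⟩
end

section
/- Let k be a field, n ≥ 1 an integer, s ∈ k nonzero, and suppose r : Fin n → k is injective with r(i)^n = s for every i (i.e. the polynomial X^n − s has n distinct roots in k). Let V be a k-vector space. Define k-linear endomorphisms T and D of the n-fold product Fin n → V by: (T v)(0) = s·v(n−1) and (T v)(i+1) = v(i) for 0 ≤ i ≤ n−2; and (D v)(i) = r(i)·v(i). Then T and D are conjugate: there exists a k-linear automorphism P of (Fin n → V) with T = P ∘ D ∘ P⁻¹. -/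
open Matrix

/-- The linear map on `Fin n → V` given by a matrix of scalars acting by `smul`. -/
def matSmul {k V : Type*} [Field k] [AddCommGroup V] [Module k V] {n : ℕ}
    (A : Matrix (Fin n) (Fin n) k) : (Fin n → V) →ₗ[k] (Fin n → V) where
  toFun u := fun j => ∑ i, A j i • u i
  map_add' u v := by
    funext j; simp [smul_add, Finset.sum_add_distrib]
  map_smul' c u := by
    funext j; simp [Finset.smul_sum, smul_comm c]

lemma matSmul_apply {k V : Type*} [Field k] [AddCommGroup V] [Module k V] {n : ℕ}
    (A : Matrix (Fin n) (Fin n) k) (u : Fin n → V) (j : Fin n) :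
    matSmul A u j = ∑ i, A j i • u i := rfl

lemma matSmul_matSmul {k V : Type*} [Field k] [AddCommGroup V] [Module k V] {n : ℕ}
    (A B : Matrix (Fin n) (Fin n) k) (u : Fin n → V) :
    matSmul A (matSmul B u) = matSmul (A * B) u := by
  funext j
  simp only [matSmul_apply, Matrix.mul_apply, Finset.smul_sum, Finset.sum_smul, smul_smul]
  rw [Finset.sum_comm]

lemma matSmul_one {k V : Type*} [Field k] [AddCommGroup V] [Module k V] {n : ℕ}
    (u : Fin n → V) : matSmul (1 : Matrix (Fin n) (Fin n) k) u = u := by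
  funext j
  rw [matSmul_apply]
  rw [Finset.sum_eq_single j]
  · simp [Matrix.one_apply]
  · intro i _ hi; simp [Matrix.one_apply, (Ne.symm hi)]
  · simp

/-- The linear equivalence coming from an invertible scalar matrix. -/
noncomputable def matEquiv {k V : Type*} [Field k] [AddCommGroup V] [Module k V] {n : ℕ}
    (A : Matrix (Fin n) (Fin n) k) (hA : IsUnit A.det) :
    (Fin n → V) ≃ₗ[k] (Fin n → V) :=
  LinearEquiv.ofLinear (matSmul A) (matSmul A⁻¹)
    (LinearMap.ext fun u => by
        show matSmul A (matSmul A⁻¹ u) = u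
        rw [matSmul_matSmul, Matrix.mul_nonsing_inv _ hA, matSmul_one])
    (LinearMap.ext fun u => by
        show matSmul A⁻¹ (matSmul A u) = u
        rw [matSmul_matSmul, Matrix.nonsing_inv_mul _ hA, matSmul_one])

/-- If `X^n - s` has `n` distinct roots `r 0, …, r (n-1)` in `k`, then the Verschiebung
operator `𝕍ₙ(s·id_V)` on `V^{⊕n}` (with `s·id_V` in the top-right corner and identities
on the subdiagonal) is conjugate to the diagonal operator with entries `r i · id_V`. -/
theorem verschiebung_diagonalization
    (k : Type*) [Field k] (V : Type*) [AddCommGroup V] [Module k V]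
    (n : ℕ) (hn : 1 ≤ n) (s : k) (hs : s ≠ 0)
    (r : Fin n → k) (hr : Function.Injective r) (hroot : ∀ i, r i ^ n = s)
    (T D : (Fin n → V) →ₗ[k] (Fin n → V))
    (hT0 : ∀ v : Fin n → V, T v ⟨0, hn⟩ = s • v ⟨n - 1, by omega⟩)
    (hTsucc : ∀ (v : Fin n → V) (i : ℕ) (h : i + 1 < n),
        T v ⟨i + 1, h⟩ = v ⟨i, by omega⟩)
    (hD : ∀ (v : Fin n → V) (i : Fin n), D v i = r i • v i) :
    ∃ P : (Fin n → V) ≃ₗ[k] (Fin n → V), ∀ v : Fin n → V, T v = P (D (P.symm v)) := by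
  set M : Matrix (Fin n) (Fin n) k := fun j i => r i ^ (n - 1 - (j : ℕ)) with hM
  have hMdet : IsUnit M.det := by
    have hMeq : M = ((Matrix.vandermonde r)ᵀ).submatrix (⇑(Fin.revPerm : Equiv.Perm (Fin n))) id := by
      ext j i
      simp only [hM, Matrix.vandermonde, Matrix.submatrix_apply, Matrix.transpose_apply,
        Matrix.of_apply, id, Fin.revPerm_apply, Fin.val_rev]
      congr 1
      omega
    have hvd : (Matrix.vandermonde r).det ≠ 0 := Matrix.det_vandermonde_ne_zero_iff.mpr hr
    rw [hMeq]
    rw [Matrix.det_permute (Fin.revPerm : Equiv.Perm (Fin n)) ((Matrix.vandermonde r)ᵀ)]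
    rw [Matrix.det_transpose]
    apply IsUnit.mul
    · exact (Int.isUnit_iff.mp (Equiv.Perm.sign _).isUnit).elim (by intro h; rw [h]; simp)
        (by intro h; rw [h]; simp)
    · exact (isUnit_iff_ne_zero).mpr hvd
  refine ⟨matEquiv M hMdet, fun v => ?_⟩
  have key : ∀ u : Fin n → V, T (matSmul M u) = matSmul M (D u) := by
    intro u
    funext j
    rcases j with ⟨j, hj⟩
    rcases j with _ | i
    · rw [hT0, matSmul_apply, matSmul_apply, Finset.smul_sum]
      refine Finset.sum_congr rfl fun i _ => ?_
      rw [hD]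
      simp only [hM, smul_smul]
      congr 1
      rw [show n - 1 - (n - 1) = 0 by omega, pow_zero, mul_one,
        show n - 1 - (0 : ℕ) = n - 1 by omega, ← pow_succ, show n - 1 + 1 = n by omega, hroot]
    · rw [hTsucc _ _ hj, matSmul_apply, matSmul_apply]
      refine Finset.sum_congr rfl fun l _ => ?_
      rw [hD]
      simp only [hM, smul_smul]
      congr 1
      rw [← pow_succ]
      congr 1
      omega
  have := key ((matEquiv M hMdet).symm v)
  have hPP : matSmul M ((matEquiv M hMdet).symm v) = v := (matEquiv M hMdet).apply_symm_apply v
  -- matEquiv M hMdet coercion is matSmul M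
  calc T v = T (matSmul M ((matEquiv M hMdet).symm v)) := by rw [hPP]
    _ = matSmul M (D ((matEquiv M hMdet).symm v)) := this
    _ = (matEquiv M hMdet) (D ((matEquiv M hMdet).symm v)) := rfl
end

section
/- Let J be a nonempty finite set and let q_j > 1 be real numbers for j ∈ J. Let α : ℕ≥1 → ℕ≥1 satisfy α(n) ≥ 1 and α(nm) = α(n)·α(m) for all n, m ≥ 1, let g : ℕ≥1 → ℝ satisfy g(n) > 0 and g(nm) = g(n)·g(m) for all n, m ≥ 1, and let β > 0 be real. Then the family f(n, j, k) = q_j^{−k·α(n)·β} · g(n)^{−β}, indexed by (n, j, k) ∈ ℕ≥1 × J × ℕ, is summable if and only if the family n ↦ g(n)^{−β} (n ≥ 1) is summable; and in that case its sum equals ∑_{n≥1} ∑_{j∈J} g(n)^{−β} / (1 − q_j^{−α(n)·β}). -/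
set_option maxHeartbeats 1000000

/-- Partition function for a norm group which is a finite union of geometric
progressions: the family `(n,j,k) ↦ q_j^{-k·α(n)·β}·g(n)^{-β}` is summable exactly when
`n ↦ g(n)^{-β}` is, and its sum is `∑_n ∑_j g(n)^{-β}/(1 - q_j^{-α(n)β})`. -/
theorem partition_function_finite_progressions
    (J : Type*) [Fintype J] [Nonempty J]
    (q : J → ℝ) (hq : ∀ j, 1 < q j)
    (α : ℕ → ℕ) (hα1 : ∀ n, 1 ≤ n → 1 ≤ α n)
    (hαmul : ∀ n m, 1 ≤ n → 1 ≤ m → α (n * m) = α n * α m)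
    (g : ℕ → ℝ) (hg : ∀ n, 1 ≤ n → 0 < g n)
    (hgmul : ∀ n m, 1 ≤ n → 1 ≤ m → g (n * m) = g n * g m)
    (β : ℝ) (hβ : 0 < β) :
    (Summable (fun x : {n : ℕ // 1 ≤ n} × J × ℕ =>
        q x.2.1 ^ (-((x.2.2 : ℝ) * ((α x.1 : ℕ) : ℝ) * β)) * g x.1 ^ (-β)) ↔
      Summable (fun n : {n : ℕ // 1 ≤ n} => g n ^ (-β))) ∧
    (Summable (fun n : {n : ℕ // 1 ≤ n} => g n ^ (-β)) →
      ∑' x : {n : ℕ // 1 ≤ n} × J × ℕ,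
          q x.2.1 ^ (-((x.2.2 : ℝ) * ((α x.1 : ℕ) : ℝ) * β)) * g x.1 ^ (-β)
        = ∑' n : {n : ℕ // 1 ≤ n}, ∑ j : J,
            g n ^ (-β) / (1 - q j ^ (-(((α n : ℕ) : ℝ) * β)))) := by
  set A := {n : ℕ // 1 ≤ n}
  set f : A × J × ℕ → ℝ := fun x =>
    q x.2.1 ^ (-((x.2.2 : ℝ) * ((α x.1 : ℕ) : ℝ) * β)) * g x.1 ^ (-β) with hf
  -- r n j : the ratio of the geometric series
  set r : A → J → ℝ := fun n j => q j ^ (-(((α n : ℕ) : ℝ) * β)) with hr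
  have hq0 : ∀ j, (0 : ℝ) < q j := fun j => lt_trans one_pos (hq j)
  have hr0 : ∀ n j, 0 ≤ r n j := fun n j => (Real.rpow_pos_of_pos (hq0 j) _).le
  have hr1 : ∀ n j, r n j < 1 := by
    intro n j
    apply Real.rpow_lt_one_of_one_lt_of_neg (hq j)
    have : (0:ℝ) < ((α n : ℕ) : ℝ) * β := by
      apply mul_pos _ hβ
      exact_mod_cast Nat.lt_of_lt_of_le Nat.zero_lt_one (hα1 n n.2)
    linarith
  -- rewrite f as a power of r
  have hfeq : ∀ x : A × J × ℕ, f x = (r x.1 x.2.1) ^ x.2.2 * g x.1 ^ (-β) := by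
    intro ⟨n, j, k⟩
    simp only [hf, hr]
    congr 1
    rw [← Real.rpow_natCast (q j ^ (-(((α n : ℕ) : ℝ) * β))) k,
      ← Real.rpow_mul (hq0 j).le]
    ring_nf
  have hg0 : ∀ n : A, 0 < g n := fun n => hg n n.2
  have hgβ0 : ∀ n : A, 0 ≤ g (n : ℕ) ^ (-β) := fun n => (Real.rpow_pos_of_pos (hg0 n) _).le
  have hf0 : ∀ x, 0 ≤ f x := by
    intro x
    rw [hfeq x]
    exact mul_nonneg (pow_nonneg (hr0 _ _) _) (hgβ0 _)
  -- the uniform bound M on the ratios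
  obtain ⟨j₀⟩ := ‹Nonempty J›
  set M : ℝ := Finset.univ.sup' (Finset.univ_nonempty) (fun j : J => q j ^ (-β)) with hM
  have hM_mem : ∃ j, M = q j ^ (-β) := by
    obtain ⟨j, _, hj⟩ := Finset.exists_mem_eq_sup' (Finset.univ_nonempty) (fun j : J => q j ^ (-β))
    exact ⟨j, hj⟩
  have hM0 : 0 ≤ M := by
    obtain ⟨j, hj⟩ := hM_mem
    rw [hj]; exact (Real.rpow_pos_of_pos (hq0 j) _).le
  have hM1 : M < 1 := by
    obtain ⟨j, hj⟩ := hM_mem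
    rw [hj]
    exact Real.rpow_lt_one_of_one_lt_of_neg (hq j) (by linarith)
  have hrM : ∀ n j, r n j ≤ M := by
    intro n j
    have h1 : r n j ≤ q j ^ (-β) := by
      apply Real.rpow_le_rpow_of_exponent_le (hq j).le
      have hα : (1:ℝ) ≤ ((α n : ℕ) : ℝ) := by exact_mod_cast hα1 n n.2
      nlinarith
    refine h1.trans ?_
    rw [hM]
    exact Finset.le_sup' (fun j : J => q j ^ (-β)) (Finset.mem_univ j)
  -- summability equivalence
  have hiff : Summable f ↔ Summable (fun n : A => g n ^ (-β)) := by
    constructor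
    · intro hs
      have := hs.comp_injective (f := f) (i := fun n : A => (n, j₀, 0))
        (fun a b hab => by simpa using congrArg (fun p : A × J × ℕ => p.1) hab)
      simpa only [Function.comp_def, hfeq, pow_zero, one_mul] using this
    · intro hs
      have hMsum : Summable (fun k : ℕ => M ^ k) := summable_geometric_of_lt_one hM0 hM1
      have h1 : Summable (fun p : J × ℕ => (1 : ℝ) * M ^ p.2) :=
        Summable.mul_of_nonneg (Summable.of_finite) hMsum
          (fun _ => zero_le_one) (fun k => pow_nonneg hM0 k)
      have h2 : Summable (fun x : A × (J × ℕ) => g x.1 ^ (-β) * ((1:ℝ) * M ^ x.2.2)) :=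
        Summable.mul_of_nonneg hs h1 hgβ0
          (fun p => mul_nonneg zero_le_one (pow_nonneg hM0 _))
      apply Summable.of_nonneg_of_le hf0 _ h2
      intro ⟨n, j, k⟩
      rw [hfeq, one_mul, mul_comm]
      exact mul_le_mul_of_nonneg_left
        (pow_le_pow_left₀ (hr0 n j) (hrM n j) k) (hgβ0 n)
  refine ⟨hiff, ?_⟩
  intro hs
  have hsf : Summable f := hiff.mpr hs
  rw [Summable.tsum_prod hsf]
  apply tsum_congr
  intro n
  have hfib : Summable (fun p : J × ℕ => f (n, p)) := hsf.prod_factor n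
  rw [Summable.tsum_prod hfib, tsum_fintype]
  apply Finset.sum_congr rfl
  intro j _
  have : (fun k : ℕ => f (n, j, k)) = fun k : ℕ => (r n j) ^ k * g (n : ℕ) ^ (-β) := by
    funext k; exact hfeq (n, j, k)
  rw [this, tsum_mul_right, tsum_geometric_of_lt_one (hr0 n j) (hr1 n j),
    div_eq_mul_inv, mul_comm]
end

section
/- Let α : ℕ≥1 → ℕ≥1 satisfy α(n) ≥ 1 and α(nm) = α(n)·α(m) for all n, m ≥ 1, let g : ℕ≥1 → ℝ satisfy g(n) > 0 and g(nm) = g(n)·g(m) for all n, m ≥ 1, and let β > 3/2 be a real number such that the family n ↦ g(n)^{−β} (n ≥ 1) is summable. Then the family (n, m) ↦ g(n)^{−β} · m^{−β·α(n)}, indexed by (n, m) ∈ ℕ≥1 × ℕ≥1, is summable, and its sum equals ∑_{n≥1} g(n)^{−β} · ζ(β·α(n)). -/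
/-- Partition function for an infinite union of geometric progressions with
`h(λ_r) = p_r`: for `β > 3/2` with `∑ g(n)^{-β}` summable, the family
`(n,m) ↦ g(n)^{-β}·m^{-β·α(n)}` is summable, with sum `∑_n g(n)^{-β}·ζ(β·α(n))`. -/
theorem partition_function_zeta
    (α : ℕ → ℕ) (hα1 : ∀ n, 1 ≤ n → 1 ≤ α n)
    (hαmul : ∀ n m, 1 ≤ n → 1 ≤ m → α (n * m) = α n * α m)
    (g : ℕ → ℝ) (hg : ∀ n, 1 ≤ n → 0 < g n)
    (hgmul : ∀ n m, 1 ≤ n → 1 ≤ m → g (n * m) = g n * g m)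
    (β : ℝ) (hβ : (3 : ℝ) / 2 < β)
    (hsum : Summable (fun n : {n : ℕ // 1 ≤ n} => g n ^ (-β))) :
    Summable (fun x : {n : ℕ // 1 ≤ n} × {m : ℕ // 1 ≤ m} =>
        g x.1 ^ (-β) * ((x.2 : ℕ) : ℝ) ^ (-(β * ((α x.1 : ℕ) : ℝ)))) ∧
    ∑' x : {n : ℕ // 1 ≤ n} × {m : ℕ // 1 ≤ m},
        g x.1 ^ (-β) * ((x.2 : ℕ) : ℝ) ^ (-(β * ((α x.1 : ℕ) : ℝ)))
      = ∑' n : {n : ℕ // 1 ≤ n},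
          g n ^ (-β) * ∑' m : {m : ℕ // 1 ≤ m}, ((m : ℕ) : ℝ) ^ (-(β * ((α n : ℕ) : ℝ))) := by
  have hβpos : (0 : ℝ) < β := lt_trans (by norm_num) hβ
  -- summability of m ↦ m^(-β) over ℕ, hence over the subtype
  have hζ : Summable (fun m : ℕ => (m : ℝ) ^ (-β)) :=
    (Real.summable_nat_rpow).mpr (by linarith)
  have hζ' : Summable (fun m : {m : ℕ // 1 ≤ m} => ((m : ℕ) : ℝ) ^ (-β)) :=
    hζ.subtype _
  -- the dominating family
  have hB : Summable (fun x : {n : ℕ // 1 ≤ n} × {m : ℕ // 1 ≤ m} =>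
      g x.1 ^ (-β) * ((x.2 : ℕ) : ℝ) ^ (-β)) :=
    hsum.mul_of_nonneg hζ'
      (fun n => Real.rpow_nonneg (hg n n.2).le _)
      (fun m => Real.rpow_nonneg (by exact_mod_cast Nat.zero_le _) _)
  have key : ∀ x : {n : ℕ // 1 ≤ n} × {m : ℕ // 1 ≤ m},
      ((x.2 : ℕ) : ℝ) ^ (-(β * ((α x.1 : ℕ) : ℝ))) ≤ ((x.2 : ℕ) : ℝ) ^ (-β) := by
    intro ⟨n, m⟩
    apply Real.rpow_le_rpow_of_exponent_le (by exact_mod_cast m.2)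
    have h1 : (1 : ℝ) ≤ ((α n : ℕ) : ℝ) := by exact_mod_cast hα1 n n.2
    nlinarith
  have hS : Summable (fun x : {n : ℕ // 1 ≤ n} × {m : ℕ // 1 ≤ m} =>
      g x.1 ^ (-β) * ((x.2 : ℕ) : ℝ) ^ (-(β * ((α x.1 : ℕ) : ℝ)))) := by
    apply hB.of_nonneg_of_le
    · intro x
      exact mul_nonneg (Real.rpow_nonneg (hg x.1 x.1.2).le _)
        (Real.rpow_nonneg (by exact_mod_cast Nat.zero_le _) _)
    · intro x
      exact mul_le_mul_of_nonneg_left (key x) (Real.rpow_nonneg (hg x.1 x.1.2).le _)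
  refine ⟨hS, ?_⟩
  rw [Summable.tsum_prod' hS fun b => hS.prod_factor b]
  exact tsum_congr fun n => by simpa using (tsum_mul_left (a := g n ^ (-β)))
end

section
/- Let q ≥ 2 be a natural number, let g : ℕ≥1 → ℝ satisfy g(n) > 0 and g(nm) = g(n)·g(m) for all n, m ≥ 1, and let β > 0 be real. Then: (a) the family (n, k) ↦ q^{−k·n·β/2} · g(n)^{−β}, indexed by (n, k) ∈ ℕ≥1 × ℕ, is summable if and only if n ↦ g(n)^{−β} (n ≥ 1) is summable, and in that case its sum equals ∑_{n≥1} g(n)^{−β} / (1 − q^{−n·β/2}); (b) if moreover g(n) = n for all n and β > 1, then this sum equals ∑_{k≥0} ∑_{n≥1} (q^{−k·β/2})^n · n^{−β}, i.e. the series of polylogarithms ∑_{k≥0} Li_β(q^{−kβ/2}). -/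
/-- Partition function of the Weil-number QSM-system: (a) the family
`(n,k) ↦ q^{-k·n·β/2}·g(n)^{-β}` is summable iff `n ↦ g(n)^{-β}` is, with sum
`∑_n g(n)^{-β}/(1 - q^{-nβ/2})`; (b) for `g(n) = n` and `β > 1` this sum is the series
of polylogarithms `∑_{k≥0} Li_β(q^{-kβ/2})`. -/
theorem partition_function_weil_numbers
    (q : ℕ) (hq : 2 ≤ q)
    (g : ℕ → ℝ) (hg : ∀ n, 1 ≤ n → 0 < g n)
    (hgmul : ∀ n m, 1 ≤ n → 1 ≤ m → g (n * m) = g n * g m)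
    (β : ℝ) (hβ : 0 < β) :
    ((Summable (fun x : {n : ℕ // 1 ≤ n} × ℕ =>
          (q : ℝ) ^ (-((x.2 : ℝ) * ((x.1 : ℕ) : ℝ) * β / 2)) * g x.1 ^ (-β)) ↔
        Summable (fun n : {n : ℕ // 1 ≤ n} => g n ^ (-β))) ∧
      (Summable (fun n : {n : ℕ // 1 ≤ n} => g n ^ (-β)) →
        ∑' x : {n : ℕ // 1 ≤ n} × ℕ,
            (q : ℝ) ^ (-((x.2 : ℝ) * ((x.1 : ℕ) : ℝ) * β / 2)) * g x.1 ^ (-β)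
          = ∑' n : {n : ℕ // 1 ≤ n},
              g n ^ (-β) / (1 - (q : ℝ) ^ (-(((n : ℕ) : ℝ) * β / 2))))) ∧
    ((∀ n, 1 ≤ n → g n = n) → 1 < β →
      ∑' x : {n : ℕ // 1 ≤ n} × ℕ,
          (q : ℝ) ^ (-((x.2 : ℝ) * ((x.1 : ℕ) : ℝ) * β / 2)) * g x.1 ^ (-β)
        = ∑' k : ℕ, ∑' n : {n : ℕ // 1 ≤ n},
            ((q : ℝ) ^ (-((k : ℝ) * β / 2))) ^ ((n : ℕ)) * ((n : ℕ) : ℝ) ^ (-β)) := by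
  have hq1 : (1:ℝ) < (q:ℝ) := by
    have : (2:ℝ) ≤ (q:ℝ) := by exact_mod_cast hq
    linarith
  have hq0 : (0:ℝ) ≤ (q:ℝ) := by positivity
  set S := {n : ℕ // 1 ≤ n}
  set f : S × ℕ → ℝ := fun x =>
    (q : ℝ) ^ (-((x.2 : ℝ) * ((x.1 : ℕ) : ℝ) * β / 2)) * g x.1 ^ (-β) with hf
  set r : S → ℝ := fun n => (q:ℝ) ^ (-(((n:ℕ):ℝ) * β / 2)) with hrdef
  set a : S → ℝ := fun n => g n ^ (-β) with hadef
  have ha0 : ∀ n : S, 0 ≤ a n := fun n => Real.rpow_nonneg (hg n n.2).le _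
  have hr0 : ∀ n : S, 0 ≤ r n := fun n => Real.rpow_nonneg hq0 _
  have hnpos : ∀ n : S, (1:ℝ) ≤ ((n:ℕ):ℝ) := by
    intro n; exact_mod_cast n.2
  have hr1 : ∀ n : S, r n < 1 := by
    intro n
    apply Real.rpow_lt_one_of_one_lt_of_neg hq1
    have h1 := hnpos n
    nlinarith
  have hfib : ∀ (n : S) (k : ℕ),
      (q : ℝ) ^ (-((k : ℝ) * ((n : ℕ) : ℝ) * β / 2)) = (r n) ^ k := by
    intro n k
    rw [hrdef]
    rw [← Real.rpow_natCast ((q:ℝ) ^ (-(((n:ℕ):ℝ)*β/2))) k, ← Real.rpow_mul hq0]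
    congr 1
    ring
  have hfeq : ∀ x : S × ℕ, f x = (r x.1) ^ x.2 * a x.1 := by
    intro x; rw [hf]; dsimp only; rw [hfib]
  have hfibsum : ∀ n : S, Summable (fun k : ℕ => f (n, k)) := by
    intro n
    apply Summable.congr ((summable_geometric_of_lt_one (hr0 n) (hr1 n)).mul_right (a n))
    intro k; exact (hfeq (n, k)).symm
  have hfibtsum : ∀ n : S, ∑' k : ℕ, f (n, k) = a n / (1 - r n) := by
    intro n
    calc ∑' k : ℕ, f (n, k) = ∑' k : ℕ, (r n) ^ k * a n := by
          exact tsum_congr fun k => hfeq (n, k)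
      _ = (∑' k : ℕ, (r n) ^ k) * a n := tsum_mul_right
      _ = (1 - r n)⁻¹ * a n := by rw [tsum_geometric_of_lt_one (hr0 n) (hr1 n)]
      _ = a n / (1 - r n) := by rw [div_eq_mul_inv, mul_comm]
  have hf0 : ∀ x : S × ℕ, 0 ≤ f x := by
    intro x; rw [hfeq]; exact mul_nonneg (pow_nonneg (hr0 _) _) (ha0 _)
  -- bounds for comparison
  have hr1' : r ⟨1, le_refl 1⟩ < 1 := hr1 _
  have hrmono : ∀ n : S, r n ≤ r ⟨1, le_refl 1⟩ := by
    intro n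
    apply (Real.rpow_le_rpow_left_iff hq1).mpr
    have h1 := hnpos n
    simp only [Nat.cast_one]
    nlinarith
  have hsub : ∀ n : S, (0:ℝ) < 1 - r n := fun n => by linarith [hr1 n]
  have hcomp : Summable (fun n : S => a n / (1 - r n)) ↔ Summable a := by
    constructor
    · intro h
      apply Summable.of_nonneg_of_le ha0 _ h
      intro n
      rw [le_div_iff₀ (hsub n)]
      nlinarith [ha0 n, hr0 n, hr1 n]
    · intro h
      apply Summable.of_nonneg_of_le
        (fun n => div_nonneg (ha0 n) (hsub n).le)
        (fun n => ?_) (h.mul_right (1 - r ⟨1, le_refl 1⟩)⁻¹)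
      rw [div_le_iff₀ (hsub n), mul_assoc]
      have hc : (1:ℝ) ≤ (1 - r ⟨1, le_refl 1⟩)⁻¹ * (1 - r n) := by
        rw [← div_eq_inv_mul, le_div_iff₀ (by linarith [hr1'] : (0:ℝ) < 1 - r ⟨1, le_refl 1⟩)]
        have := hrmono n
        linarith
      nlinarith [ha0 n]
  have hiff : Summable f ↔ Summable a := by
    rw [summable_prod_of_nonneg hf0]
    constructor
    · rintro ⟨-, h2⟩
      rw [← hcomp]
      exact h2.congr fun n => hfibtsum n
    · intro h
      refine ⟨hfibsum, ?_⟩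
      exact (hcomp.mpr h).congr fun n => (hfibtsum n).symm
  have hsumeq : Summable a →
      ∑' x : S × ℕ, f x = ∑' n : S, a n / (1 - r n) := by
    intro h
    rw [Summable.tsum_prod' (hiff.mpr h) hfibsum]
    exact tsum_congr hfibtsum
  refine ⟨⟨hiff, hsumeq⟩, ?_⟩
  intro hgn hβ1
  have hna : ∀ n : S, a n = ((n:ℕ):ℝ) ^ (-β) := by
    intro n; rw [hadef]; dsimp only; rw [hgn n n.2]
  have hasum : Summable a := by
    have h1 : Summable (fun n : ℕ => (n:ℝ) ^ (-β)) :=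
      Real.summable_nat_rpow.mpr (by linarith)
    have h2 := h1.subtype {n : ℕ | 1 ≤ n}
    exact h2.congr fun n => (hna n).symm
  have hfsum : Summable f := hiff.mpr hasum
  -- swap the order of summation
  have hswap : ∑' x : S × ℕ, f x = ∑' k : ℕ, ∑' n : S, f (n, k) := by
    have hs : Summable fun p : ℕ × S => f p.swap := hfsum.prod_symm
    have h1 : ∑' p : ℕ × S, f p.swap = ∑' x : S × ℕ, f x :=
      (Equiv.prodComm ℕ S).tsum_eq f
    have hcol : ∀ k : ℕ, Summable fun n : S => f (n, k) := by
      intro k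
      apply Summable.of_nonneg_of_le (fun n => hf0 (n, k)) _ hasum
      intro n
      rw [hfeq (n, k)]
      have : r n ^ k ≤ 1 := pow_le_one₀ (hr0 n) (hr1 n).le
      nlinarith [ha0 n]
    rw [← h1, Summable.tsum_prod' hs hcol]
    rfl
  rw [hswap]
  refine tsum_congr fun k => tsum_congr fun n => ?_
  rw [hfeq (n, k), hna]
  congr 1
  rw [hrdef]
  dsimp only
  rw [← Real.rpow_natCast ((q:ℝ) ^ (-(((n:ℕ):ℝ)*β/2))) k, ← Real.rpow_mul hq0,
    ← Real.rpow_natCast ((q:ℝ) ^ (-((k:ℝ)*β/2))) (n:ℕ), ← Real.rpow_mul hq0]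
  congr 1
  ring
end

section
/- Let q > 1 be a real number and z ∈ ℂ with |z| = 1. Then the quotient (∑_{k≥0} ∑_{n≥1} (z·q^{−k·β/2})^n·n^{−β}) / (∑_{k≥0} ∑_{n≥1} (q^{−k·β/2})^n·n^{−β}), which is defined for every real β > 1, tends to z as β → +∞. Equivalently, lim_{β→∞} (∑_{k≥0} Li_β(z q^{−kβ/2})) / (∑_{k≥0} Li_β(q^{−kβ/2})) = z. -/
open Filter Real

noncomputable def cSum : ℝ := ∑' n : ℕ, ((n : ℝ) + 2) ^ (-2 : ℝ)

def eNat : ℕ ≃ {n : ℕ // 1 ≤ n} where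
  toFun m := ⟨m + 1, Nat.le_add_left 1 m⟩
  invFun n := n.1 - 1
  left_inv m := by simp
  right_inv n := by cases n with | mk v h => simp; omega

lemma summable_cSum : Summable (fun n : ℕ => ((n : ℝ) + 2) ^ (-2 : ℝ)) := by
  have := Real.summable_nat_rpow (p := (-2:ℝ)) |>.mpr (by norm_num)
  have h2 := (summable_nat_add_iff 2).mpr this
  convert h2 using 2 with n
  push_cast
  rfl
  push_cast
  rfl

lemma cSum_nonneg : 0 ≤ cSum :=
  tsum_nonneg fun n => Real.rpow_nonneg (by positivity) _

set_option maxHeartbeats 1000000 in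
lemma key (q β : ℝ) (hq : 1 < q) (z : ℂ) (hz : ‖z‖ = 1) (hβ : 2 ≤ β)
    (hr2 : q ^ (-(β/2)) ≤ 1/2) :
    ‖(∑' k : ℕ, ∑' n : {n : ℕ // 1 ≤ n},
            (z * ((q ^ (-((k : ℝ) * β / 2)) : ℝ) : ℂ)) ^ ((n : ℕ))
              * (((((n : ℕ) : ℝ)) ^ (-β) : ℝ) : ℂ)) /
        (((∑' k : ℕ, ∑' n : {n : ℕ // 1 ≤ n},
            (q ^ (-((k : ℝ) * β / 2))) ^ ((n : ℕ)) * (((n : ℕ) : ℝ)) ^ (-β)) : ℝ) : ℂ) - z‖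
      ≤ 8 * cSum * (2:ℝ) ^ (-β) + 8 * q ^ (-(β/2)) := by
  have hq0 : (0:ℝ) < q := by linarith
  set r : ℝ := q ^ (-(β/2)) with hrdef
  have hr0 : 0 ≤ r := Real.rpow_nonneg hq0.le _
  have hr1 : r < 1 := lt_of_le_of_lt hr2 (by norm_num)
  have hpow : ∀ k : ℕ, q ^ (-((k:ℝ) * β / 2)) = r ^ k := by
    intro k
    rw [hrdef, ← Real.rpow_natCast (q ^ (-(β/2))) k, ← Real.rpow_mul hq0.le]
    ring_nf
  set H : ℕ → ℕ → ℝ := fun k n => (r ^ k) ^ (n+1) * ((n:ℝ)+1) ^ (-β) with hH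
  set G : ℕ → ℕ → ℂ := fun k n =>
    (z * ((r ^ k : ℝ):ℂ)) ^ (n+1) * ((((n:ℝ)+1) ^ (-β) : ℝ) : ℂ) with hG
  -- rewrite the sums
  have hNum : (∑' k : ℕ, ∑' n : {n : ℕ // 1 ≤ n},
      (z * ((q ^ (-((k : ℝ) * β / 2)) : ℝ) : ℂ)) ^ ((n : ℕ))
        * (((((n : ℕ) : ℝ)) ^ (-β) : ℝ) : ℂ)) = ∑' k, ∑' n : ℕ, G k n := by
    apply tsum_congr; intro k
    rw [← eNat.tsum_eq]
    apply tsum_congr; intro n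
    simp only [eNat, Equiv.coe_fn_mk, hG, hpow k]
    push_cast
    ring_nf
  have hDen : (∑' k : ℕ, ∑' n : {n : ℕ // 1 ≤ n},
      (q ^ (-((k : ℝ) * β / 2))) ^ ((n : ℕ)) * (((n : ℕ) : ℝ)) ^ (-β))
      = ∑' k, ∑' n : ℕ, H k n := by
    apply tsum_congr; intro k
    rw [← eNat.tsum_eq]
    apply tsum_congr; intro n
    simp only [eNat, Equiv.coe_fn_mk, hH, hpow k]
    push_cast
    ring_nf
  rw [hNum, hDen]
  -- basic facts
  have hHnonneg : ∀ k n, 0 ≤ H k n := by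
    intro k n
    exact mul_nonneg (pow_nonneg (pow_nonneg hr0 _) _) (Real.rpow_nonneg (by positivity) _)
  have hnorm : ∀ k n, ‖G k n‖ = H k n := by
    intro k n
    have hza : ‖z * ((r ^ k : ℝ):ℂ)‖ = r ^ k := by
      rw [norm_mul, hz, one_mul, Complex.norm_real,
        Real.norm_of_nonneg (pow_nonneg hr0 _)]
    simp only [hG, hH, norm_mul, norm_pow, hza, Complex.norm_real]
    rw [Real.norm_of_nonneg (Real.rpow_nonneg (by positivity) _)]
  have hBsum : Summable (fun n : ℕ => ((n:ℝ)+1) ^ (-β)) := by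
    have := Real.summable_nat_rpow (p := -β) |>.mpr (by linarith)
    have h2 := (summable_nat_add_iff 1).mpr this
    convert h2 using 2 with n
    push_cast
    rfl
    push_cast
    rfl
  have hrk1 : ∀ k : ℕ, (r:ℝ) ^ k ≤ 1 := fun k => pow_le_one₀ hr0 hr1.le
  have hHle : ∀ k n, H k n ≤ r ^ k * ((n:ℝ)+1) ^ (-β) := by
    intro k n
    rw [hH]
    have : (r ^ k) ^ (n+1) ≤ r ^ k := by
      calc (r ^ k) ^ (n+1) = r ^ k * (r ^ k) ^ n := by ring
      _ ≤ r ^ k * 1 := by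
          exact mul_le_mul_of_nonneg_left (pow_le_one₀ (pow_nonneg hr0 _) (hrk1 k)) (pow_nonneg hr0 _)
      _ = r ^ k := by ring
    exact mul_le_mul_of_nonneg_right this (Real.rpow_nonneg (by positivity) _)
  have hHsum : ∀ k, Summable (H k) := by
    intro k
    exact Summable.of_nonneg_of_le (hHnonneg k) (hHle k) (hBsum.mul_left _)
  have hGsum : ∀ k, Summable (G k) := by
    intro k
    apply Summable.of_norm
    simpa only [hnorm] using hHsum k
  set S : ℝ := ∑' n : ℕ, ((n:ℝ)+1) ^ (-β) with hS
  have hSk_le : ∀ k, ∑' n, H k n ≤ r ^ k * S := by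
    intro k
    rw [hS, ← tsum_mul_left]
    exact Summable.tsum_le_tsum (hHle k) (hHsum k) (hBsum.mul_left _)
  have hSk_nonneg : ∀ k, 0 ≤ ∑' n, H k n := fun k => tsum_nonneg (hHnonneg k)
  have hKsum : Summable (fun k => ∑' n, H k n) := by
    apply Summable.of_nonneg_of_le hSk_nonneg hSk_le
    exact (summable_geometric_of_lt_one hr0 hr1).mul_right S
  have hGnormle : ∀ k, ‖∑' n, G k n‖ ≤ ∑' n, H k n := by
    intro k
    have := norm_tsum_le_tsum_norm (f := G k) (by simpa only [hnorm] using hHsum k)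
    simpa only [hnorm] using this
  have hGKnorm : Summable (fun k => ‖∑' n, G k n‖) :=
    Summable.of_nonneg_of_le (fun k => norm_nonneg _) hGnormle hKsum
  have hGKsum : Summable (fun k => ∑' n, G k n) := Summable.of_norm hGKnorm
  set D : ℝ := ∑' k, ∑' n, H k n with hD
  set N : ℂ := ∑' k, ∑' n, G k n with hN
  have hH00 : H 0 0 = 1 := by
    rw [hH]; simp [Real.one_rpow]
  have hD1 : 1 ≤ D := by
    calc (1:ℝ) = H 0 0 := hH00.symm
    _ ≤ ∑' n, H 0 n := Summable.le_tsum (hHsum 0) 0 (fun n _ => hHnonneg 0 n)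
    _ ≤ D := Summable.le_tsum hKsum 0 (fun k _ => hSk_nonneg k)
  -- tail bound for k = 0
  have h2β : (2:ℝ) ^ ((2:ℝ) - β) = 4 * (2:ℝ) ^ (-β) := by
    rw [show (2:ℝ) - β = 2 + (-β) by ring, Real.rpow_add (by norm_num)]
    norm_num
  have hshift : Summable (fun n : ℕ => H 0 (n+1)) := (summable_nat_add_iff 1).mpr (hHsum 0)
  have tail1 : ∑' n : ℕ, H 0 (n+1) ≤ 4 * cSum * (2:ℝ) ^ (-β) := by
    have hterm : ∀ n : ℕ, H 0 (n+1) ≤ ((n:ℝ)+2) ^ (-2:ℝ) * (4 * (2:ℝ) ^ (-β)) := by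
      intro n
      have hpos : (0:ℝ) < (n:ℝ) + 2 := by positivity
      have h1 : H 0 (n+1) = ((n:ℝ)+2) ^ (-β) := by
        rw [hH]; simp; ring_nf
      have hle2 : ((n:ℝ)+2) ^ ((2:ℝ) - β) ≤ (2:ℝ) ^ ((2:ℝ) - β) :=
        Real.rpow_le_rpow_of_nonpos (by norm_num)
          (by linarith [Nat.cast_nonneg (α := ℝ) n]) (by linarith)
      calc H 0 (n+1) = ((n:ℝ)+2) ^ (-2:ℝ) * ((n:ℝ)+2) ^ ((2:ℝ) - β) := by
            rw [h1, ← Real.rpow_add hpos]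
            congr 1
            ring
      _ ≤ ((n:ℝ)+2) ^ (-2:ℝ) * (2:ℝ) ^ ((2:ℝ) - β) :=
            mul_le_mul_of_nonneg_left hle2 (Real.rpow_nonneg hpos.le _)
      _ = ((n:ℝ)+2) ^ (-2:ℝ) * (4 * (2:ℝ) ^ (-β)) := by rw [h2β]
    calc ∑' n : ℕ, H 0 (n+1) ≤ ∑' n : ℕ, ((n:ℝ)+2) ^ (-2:ℝ) * (4 * (2:ℝ) ^ (-β)) :=
          Summable.tsum_le_tsum hterm hshift (summable_cSum.mul_right _)
    _ = cSum * (4 * (2:ℝ) ^ (-β)) := by rw [tsum_mul_right]; rfl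
    _ = 4 * cSum * (2:ℝ) ^ (-β) := by ring
  -- tail bound for k ≥ 1
  have hinv : (1 - r)⁻¹ ≤ 2 := by
    rw [inv_le_comm₀ (by linarith) (by norm_num)]
    linarith
  have hstep : ∀ k : ℕ, ∑' n, H (k+1) n ≤ 2 * r ^ (k+1) := by
    intro k
    have hterm : ∀ n : ℕ, H (k+1) n ≤ r ^ (k+1) * r ^ n := by
      intro n
      rw [hH]
      calc (r ^ (k+1)) ^ (n+1) * ((n:ℝ)+1) ^ (-β)
          ≤ (r ^ (k+1)) ^ (n+1) * 1 := by
            apply mul_le_mul_of_nonneg_left _ (pow_nonneg (pow_nonneg hr0 _) _)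
            exact Real.rpow_le_one_of_one_le_of_nonpos (by linarith [Nat.cast_nonneg (α := ℝ) n]) (by linarith)
      _ = r ^ ((k+1) * (n+1)) := by rw [mul_one, ← pow_mul]
      _ ≤ r ^ ((k+1) + n) := pow_le_pow_of_le_one hr0 hr1.le (by nlinarith)
      _ = r ^ (k+1) * r ^ n := pow_add r _ _
    calc ∑' n, H (k+1) n ≤ ∑' n : ℕ, r ^ (k+1) * r ^ n :=
          Summable.tsum_le_tsum hterm (hHsum (k+1)) ((summable_geometric_of_lt_one hr0 hr1).mul_left _)
    _ = r ^ (k+1) * (1 - r)⁻¹ := by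
          rw [tsum_mul_left, tsum_geometric_of_lt_one hr0 hr1]
    _ ≤ r ^ (k+1) * 2 := mul_le_mul_of_nonneg_left hinv (pow_nonneg hr0 _)
    _ = 2 * r ^ (k+1) := by ring
  have hKshift : Summable (fun k : ℕ => ∑' n, H (k+1) n) := (summable_nat_add_iff 1).mpr hKsum
  have tail2 : ∑' k : ℕ, ∑' n, H (k+1) n ≤ 4 * r := by
    calc ∑' k : ℕ, ∑' n, H (k+1) n ≤ ∑' k : ℕ, 2 * r ^ (k+1) := by
          apply Summable.tsum_le_tsum hstep hKshift
          apply Summable.mul_left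
          exact (summable_nat_add_iff 1).mpr (summable_geometric_of_lt_one hr0 hr1)
    _ = 2 * (r * (1-r)⁻¹) := by
          rw [tsum_mul_left]
          congr 1
          have : ∀ k : ℕ, r ^ (k+1) = r * r ^ k := fun k => by ring
          rw [tsum_congr this, tsum_mul_left, tsum_geometric_of_lt_one hr0 hr1]
    _ ≤ 2 * (r * 2) := by
          apply mul_le_mul_of_nonneg_left _ (by norm_num)
          exact mul_le_mul_of_nonneg_left hinv hr0
    _ = 4 * r := by ring
  set ε : ℝ := 4 * cSum * (2:ℝ) ^ (-β) + 4 * r with hε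
  have hεnn : 0 ≤ ε := by
    have := cSum_nonneg
    have : (0:ℝ) ≤ (2:ℝ) ^ (-β) := Real.rpow_nonneg (by norm_num) _
    positivity
  have hDle : D ≤ 1 + ε := by
    rw [hD, Summable.tsum_eq_zero_add hKsum, Summable.tsum_eq_zero_add (hHsum 0), hH00, hε]
    have := tail1
    have := tail2
    linarith
  -- numerator bound
  have hG00 : G 0 0 = z := by
    rw [hG]; simp [Real.one_rpow]
  have hGshift : Summable (fun n : ℕ => G 0 (n+1)) := (summable_nat_add_iff 1).mpr (hGsum 0)
  have hNz : ‖N - z‖ ≤ ε := by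
    have hNsplit : N - z = (∑' n : ℕ, G 0 (n+1)) + ∑' k : ℕ, ∑' n, G (k+1) n := by
      rw [hN, Summable.tsum_eq_zero_add hGKsum, Summable.tsum_eq_zero_add (hGsum 0), hG00]
      ring
    rw [hNsplit]
    have h1 : ‖∑' n : ℕ, G 0 (n+1)‖ ≤ 4 * cSum * (2:ℝ) ^ (-β) := by
      have hs : Summable (fun n : ℕ => ‖G 0 (n+1)‖) := by
        simpa only [hnorm] using hshift
      calc ‖∑' n : ℕ, G 0 (n+1)‖ ≤ ∑' n : ℕ, ‖G 0 (n+1)‖ := norm_tsum_le_tsum_norm hs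
      _ = ∑' n : ℕ, H 0 (n+1) := by simp only [hnorm]
      _ ≤ _ := tail1
    have h2 : ‖∑' k : ℕ, ∑' n, G (k+1) n‖ ≤ 4 * r := by
      have hs : Summable (fun k : ℕ => ‖∑' n, G (k+1) n‖) := (summable_nat_add_iff 1).mpr hGKnorm
      calc ‖∑' k : ℕ, ∑' n, G (k+1) n‖ ≤ ∑' k : ℕ, ‖∑' n, G (k+1) n‖ := norm_tsum_le_tsum_norm hs
      _ ≤ ∑' k : ℕ, ∑' n, H (k+1) n := Summable.tsum_le_tsum (fun k => hGnormle (k+1)) hs hKshift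
      _ ≤ 4 * r := tail2
    calc ‖(∑' n : ℕ, G 0 (n+1)) + ∑' k : ℕ, ∑' n, G (k+1) n‖
        ≤ ‖∑' n : ℕ, G 0 (n+1)‖ + ‖∑' k : ℕ, ∑' n, G (k+1) n‖ := norm_add_le _ _
    _ ≤ ε := by rw [hε]; linarith
  -- final estimate
  have hDpos : (0:ℝ) < D := by linarith
  have hDne : (D:ℂ) ≠ 0 := by
    simp only [ne_eq, Complex.ofReal_eq_zero]
    linarith
  have heq : N / (D:ℂ) - z = (N - z * (D:ℂ)) / (D:ℂ) := by
    rw [sub_div, mul_div_assoc, div_self hDne, mul_one]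
  rw [heq]
  have hnormD : ‖(D:ℂ)‖ = D := by
    rw [Complex.norm_real, Real.norm_of_nonneg hDpos.le]
  have hbound : ‖N - z * (D:ℂ)‖ ≤ 2 * ε := by
    have hzD : ‖z * (D:ℂ) - z‖ = D - 1 := by
      have : z * (D:ℂ) - z = z * ((D:ℂ) - 1) := by ring
      rw [this, norm_mul, hz, one_mul]
      rw [show ((D:ℂ) - 1) = ((D - 1 : ℝ) : ℂ) by push_cast; ring, Complex.norm_real,
        Real.norm_of_nonneg (by linarith)]
    calc ‖N - z * (D:ℂ)‖ = ‖(N - z) - (z * (D:ℂ) - z)‖ := by congr 1; ring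
    _ ≤ ‖N - z‖ + ‖z * (D:ℂ) - z‖ := norm_sub_le _ _
    _ ≤ ε + (D - 1) := by rw [hzD]; linarith
    _ ≤ 2 * ε := by linarith
  calc ‖(N - z * (D:ℂ)) / (D:ℂ)‖ = ‖N - z * (D:ℂ)‖ / D := by rw [norm_div, hnormD]
  _ ≤ 2 * ε / 1 := by
      apply div_le_div₀ (by linarith) hbound (by norm_num) hD1
  _ = 2 * ε := by ring
  _ = 8 * cSum * (2:ℝ) ^ (-β) + 8 * r := by rw [hε]; ring

/-- Zero-temperature limit of the Weil-number Gibbs states: for `q > 1` and `|z| = 1`,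
`(∑_k Li_β(z·q^{-kβ/2})) / (∑_k Li_β(q^{-kβ/2})) → z` as `β → ∞`. -/
theorem ground_state_weil_numbers (q : ℝ) (hq : 1 < q) (z : ℂ) (hz : ‖z‖ = 1) :
    Filter.Tendsto
      (fun β : ℝ =>
        (∑' k : ℕ, ∑' n : {n : ℕ // 1 ≤ n},
            (z * ((q ^ (-((k : ℝ) * β / 2)) : ℝ) : ℂ)) ^ ((n : ℕ))
              * (((((n : ℕ) : ℝ)) ^ (-β) : ℝ) : ℂ)) /
        (((∑' k : ℕ, ∑' n : {n : ℕ // 1 ≤ n},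
            (q ^ (-((k : ℝ) * β / 2))) ^ ((n : ℕ)) * (((n : ℕ) : ℝ)) ^ (-β)) : ℝ) : ℂ))
      Filter.atTop (nhds z) := by
  have hq0 : (0:ℝ) < q := by linarith
  rw [← tendsto_sub_nhds_zero_iff]
  have t1 : Tendsto (fun β : ℝ => (2:ℝ) ^ (-β)) atTop (nhds 0) := by
    have : ∀ β : ℝ, (2:ℝ) ^ (-β) = ((2:ℝ)⁻¹) ^ β := by
      intro β
      rw [Real.rpow_neg (by norm_num), ← Real.inv_rpow (by norm_num)]
    simp only [this]
    exact tendsto_rpow_atTop_of_base_lt_one _ (by norm_num) (by norm_num)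
  have t2 : Tendsto (fun β : ℝ => q ^ (-(β/2))) atTop (nhds 0) := by
    have hb1 : q ^ (-(2⁻¹:ℝ)) < 1 := Real.rpow_lt_one_of_one_lt_of_neg hq (by norm_num)
    have hb0 : 0 < q ^ (-(2⁻¹:ℝ)) := Real.rpow_pos_of_pos hq0 _
    have : ∀ β : ℝ, q ^ (-(β/2)) = (q ^ (-(2⁻¹:ℝ))) ^ β := by
      intro β
      rw [← Real.rpow_mul hq0.le]
      congr 1
      ring
    simp only [this]
    exact tendsto_rpow_atTop_of_base_lt_one _ (by linarith) hb1
  apply squeeze_zero_norm' (a := fun β : ℝ => 8 * cSum * (2:ℝ) ^ (-β) + 8 * q ^ (-(β/2)))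
  · have h1 : ∀ᶠ β : ℝ in atTop, 2 ≤ β := eventually_ge_atTop 2
    have h2 : ∀ᶠ β : ℝ in atTop, q ^ (-(β/2)) ≤ 1/2 :=
      t2.eventually (eventually_le_nhds (by norm_num))
    filter_upwards [h1, h2] with β hβ hr2
    exact key q β hq z hz hβ hr2
  · have := ((t1.const_mul (8 * cSum)).add (t2.const_mul 8))
    simpa using this
end

section
/- Let z ∈ ℂ with |z| = 1. Then the quotient (∑_{n≥1} z^n·ζ(n·β)·n^{−β}) / (∑_{n≥1} ζ(n·β)·n^{−β}), which is defined for every real β > 3/2, tends to z as β → +∞. -/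
open Filter Real

namespace GroundStateAux

noncomputable def Z (s : ℝ) : ℝ := ∑' m : {m : ℕ // 1 ≤ m}, ((m : ℕ) : ℝ) ^ (-s)

lemma one_le_cast (m : {m : ℕ // 1 ≤ m}) : (1 : ℝ) ≤ ((m : ℕ) : ℝ) := by exact_mod_cast m.2

lemma summableZ {s : ℝ} (hs : 1 < s) :
    Summable (fun m : {m : ℕ // 1 ≤ m} => ((m : ℕ) : ℝ) ^ (-s)) :=
  (Real.summable_nat_rpow.2 (by linarith)).subtype _

lemma term_nonneg (m : {m : ℕ // 1 ≤ m}) (s : ℝ) : 0 ≤ ((m : ℕ) : ℝ) ^ (-s) :=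
  Real.rpow_nonneg (by positivity) _

lemma Z_nonneg (s : ℝ) : 0 ≤ Z s := tsum_nonneg fun m => term_nonneg m s

lemma one_le_Z {s : ℝ} (hs : 1 < s) : 1 ≤ Z s := by
  have := Summable.le_tsum (summableZ hs) ⟨1, le_rfl⟩ (fun m _ => term_nonneg m s)
  simpa [Z, Real.one_rpow] using this

lemma Z_le_Z {s t : ℝ} (ht : 1 < t) (hst : t ≤ s) : Z s ≤ Z t :=
  Summable.tsum_le_tsum
    (fun m => Real.rpow_le_rpow_of_exponent_le (one_le_cast m) (by linarith))
    (summableZ (lt_of_lt_of_le ht hst)) (summableZ ht)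

end GroundStateAux

open GroundStateAux

/-- Zero-temperature limit of the Gibbs states of the QSM-system of algebraic numbers:
for `|z| = 1`, `(∑_n zⁿ ζ(nβ) n^{-β}) / (∑_n ζ(nβ) n^{-β}) → z` as `β → ∞`. -/
theorem ground_state_algebraic_numbers (z : ℂ) (hz : ‖z‖ = 1) :
    Filter.Tendsto
      (fun β : ℝ =>
        (∑' n : {n : ℕ // 1 ≤ n},
            z ^ ((n : ℕ))
              * (((∑' m : {m : ℕ // 1 ≤ m},
                    (((m : ℕ) : ℝ)) ^ (-(((n : ℕ) : ℝ) * β))) : ℝ) : ℂ)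
              * (((((n : ℕ) : ℝ)) ^ (-β) : ℝ) : ℂ)) /
        (((∑' n : {n : ℕ // 1 ≤ n},
            (∑' m : {m : ℕ // 1 ≤ m}, (((m : ℕ) : ℝ)) ^ (-(((n : ℕ) : ℝ) * β)))
              * (((n : ℕ) : ℝ)) ^ (-β)) : ℝ) : ℂ))
      Filter.atTop (nhds z) := by
  rw [tendsto_iff_norm_sub_tendsto_zero]
  have hzn : ‖z‖ = 1 := hz
  -- the tendsto-to-zero bound
  have hb0 : Tendsto (fun β : ℝ => 2 * (Z 2 * Z 2 * (2 : ℝ) ^ (2 - β))) atTop (nhds 0) := by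
    have h1 : Tendsto (fun β : ℝ => (2 : ℝ) ^ (2 - β)) atTop (nhds 0) := by
      have h2 : Tendsto (fun β : ℝ => 2 - β) atTop atBot :=
        tendsto_atBot_add_const_left atTop 2 tendsto_neg_atTop_atBot
      exact (tendsto_rpow_atBot_of_base_gt_one 2 one_lt_two).comp h2
    have := (h1.const_mul (Z 2 * Z 2)).const_mul (2 : ℝ)
    simpa [mul_comm, mul_assoc] using this
  refine squeeze_zero' (Eventually.of_forall fun β => norm_nonneg _) ?_ hb0
  filter_upwards [eventually_ge_atTop (2 : ℝ)] with β hβ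
  have hβ1 : (1 : ℝ) < β := by linarith
  set b : {n : ℕ // 1 ≤ n} := ⟨1, le_rfl⟩ with hb
  -- basic facts for each n
  have hnb : ∀ n : {n : ℕ // 1 ≤ n}, (2 : ℝ) ≤ ((n : ℕ) : ℝ) * β := fun n => by
    have h1 := one_le_cast n
    nlinarith
  have hZn : ∀ n : {n : ℕ // 1 ≤ n}, Z (((n : ℕ) : ℝ) * β) ≤ Z 2 := fun n =>
    Z_le_Z one_lt_two (hnb n)
  set f : {n : ℕ // 1 ≤ n} → ℝ := fun n => Z (((n : ℕ) : ℝ) * β) * ((n : ℕ) : ℝ) ^ (-β)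
    with hf
  have hfnonneg : ∀ n, 0 ≤ f n := fun n => mul_nonneg (Z_nonneg _) (term_nonneg n β)
  have hfS : Summable f := by
    refine Summable.of_nonneg_of_le hfnonneg (fun n => ?_) ((summableZ hβ1).mul_left (Z 2))
    exact mul_le_mul_of_nonneg_right (hZn n) (term_nonneg n β)
  have hfb : f b = Z β := by
    show Z (((1:ℕ):ℝ) * β) * ((1:ℕ):ℝ) ^ (-β) = Z β
    simp
  -- the complex numerator terms
  set g : {n : ℕ // 1 ≤ n} → ℂ := fun n =>
    z ^ ((n : ℕ)) * ((Z (((n : ℕ) : ℝ) * β) : ℝ) : ℂ) * ((((n : ℕ) : ℝ) ^ (-β) : ℝ) : ℂ)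
    with hg
  have hgnorm : ∀ n, ‖g n‖ = f n := by
    intro n
    have : ‖z ^ ((n : ℕ))‖ = 1 := by rw [norm_pow, hzn, one_pow]
    simp [hg, hf, norm_mul, this, Real.norm_eq_abs,
      abs_of_nonneg (Z_nonneg _), abs_of_nonneg (term_nonneg n β)]
  have hgS : Summable g :=
    Summable.of_norm_bounded hfS (fun n => (hgnorm n).le)
  set S : ℝ := ∑' n, f n with hS
  set N : ℂ := ∑' n, g n with hN
  have hS1 : 1 ≤ S := by
    have h1 := Summable.le_tsum hfS b (fun m _ => hfnonneg m)
    have h2 : (1 : ℝ) ≤ f b := by rw [hfb]; exact one_le_Z hβ1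
    linarith
  have hSne : ((S : ℝ) : ℂ) ≠ 0 := by
    simp only [ne_eq, Complex.ofReal_eq_zero]
    linarith
  -- key : N - z * S = sum of (z^n - z) * ...
  have hzS : z * ((S : ℝ) : ℂ) = ∑' n, z * ((f n : ℝ) : ℂ) := by
    rw [hS, Complex.ofReal_tsum, tsum_mul_left]
  have hfC : Summable (fun n => ((f n : ℝ) : ℂ)) := by
    refine Summable.of_norm ?_
    simpa [Complex.norm_real, Real.norm_eq_abs, abs_of_nonneg (hfnonneg _)] using hfS
  have hdiff : N - z * ((S : ℝ) : ℂ)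
      = ∑' n : {n : ℕ // 1 ≤ n}, (z ^ ((n : ℕ)) - z) * ((f n : ℝ) : ℂ) := by
    rw [hzS, hN, ← Summable.tsum_sub hgS (hfC.mul_left z)]
    refine tsum_congr fun n => ?_
    simp only [hg, hf, Complex.ofReal_mul]
    ring
  -- tail sum T
  set T : ℝ := ∑' n, if n = b then 0 else f n with hT
  have hTsummable : Summable (fun n => if n = b then 0 else f n) := by
    refine Summable.of_nonneg_of_le (fun n => ?_) (fun n => ?_) hfS
    · by_cases h : n = b <;> simp [h, hfnonneg]
    · by_cases h : n = b <;> simp [h, hfnonneg]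
  have hTnonneg : 0 ≤ T :=
    tsum_nonneg fun n => by by_cases h : n = b <;> simp [h, hfnonneg]
  -- bound on the numerator difference
  have hnormdiff : ‖N - z * ((S : ℝ) : ℂ)‖ ≤ 2 * T := by
    rw [hdiff]
    have hbd : ∀ n : {n : ℕ // 1 ≤ n}, ‖(z ^ ((n : ℕ)) - z) * ((f n : ℝ) : ℂ)‖
        ≤ (if n = b then 0 else 2 * f n) := by
      intro n
      by_cases h : n = b
      · rw [if_pos h, h]
        show ‖(z ^ (1:ℕ) - z) * ((f b : ℝ) : ℂ)‖ ≤ 0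
        simp
      · rw [if_neg h, norm_mul]
        have h1 : ‖z ^ ((n : ℕ)) - z‖ ≤ 2 := by
          calc ‖z ^ ((n : ℕ)) - z‖ ≤ ‖z ^ ((n : ℕ))‖ + ‖z‖ := norm_sub_le _ _
          _ = 2 := by rw [norm_pow, hzn]; norm_num
        have h2 : ‖((f n : ℝ) : ℂ)‖ = f n := by
          simp [Complex.norm_real, Real.norm_eq_abs, abs_of_nonneg (hfnonneg n)]
        rw [h2]
        exact mul_le_mul_of_nonneg_right h1 (hfnonneg n)
    have hsum2 : Summable (fun n => if n = b then 0 else 2 * f n) := by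
      have : (fun n => if n = b then 0 else 2 * f n)
          = fun n => 2 * (if n = b then 0 else f n) := by
        funext n; split <;> ring
      rw [this]
      exact hTsummable.mul_left 2
    have := tsum_of_norm_bounded hsum2.hasSum hbd
    refine this.trans_eq ?_
    have : (fun n => if n = b then 0 else 2 * f n)
        = fun n => 2 * (if n = b then 0 else f n) := by
      funext n; split <;> ring
    rw [this, tsum_mul_left, hT]
  -- bound on T
  have hTbound : T ≤ Z 2 * Z 2 * (2 : ℝ) ^ (2 - β) := by
    have hbd : ∀ n : {n : ℕ // 1 ≤ n}, (if n = b then 0 else f n)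
        ≤ Z 2 * (2 : ℝ) ^ (2 - β) * ((n : ℕ) : ℝ) ^ (-(2 : ℝ)) := by
      intro n
      have hpos : (0 : ℝ) ≤ Z 2 * (2 : ℝ) ^ (2 - β) * ((n : ℕ) : ℝ) ^ (-(2 : ℝ)) := by
        have := Z_nonneg 2
        positivity
      by_cases h : n = b
      · rw [if_pos h]; exact hpos
      · rw [if_neg h]
        have h2n : (2 : ℝ) ≤ ((n : ℕ) : ℝ) := by
          have : 2 ≤ (n : ℕ) := by
            rcases Nat.lt_or_ge (n : ℕ) 2 with h' | h'
            · exfalso; apply h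
              have h1 := n.2
              have : (n : ℕ) = 1 := by omega
              exact Subtype.ext this
            · exact h'
          exact_mod_cast this
        have hnpos : (0 : ℝ) < ((n : ℕ) : ℝ) := by linarith
        have hre : ((n : ℕ) : ℝ) ^ (-β)
            = ((n : ℕ) : ℝ) ^ (-(2 : ℝ)) * ((n : ℕ) : ℝ) ^ (2 - β) := by
          rw [← Real.rpow_add hnpos]; ring_nf
        have hle : ((n : ℕ) : ℝ) ^ (2 - β) ≤ (2 : ℝ) ^ (2 - β) :=
          Real.rpow_le_rpow_of_nonpos two_pos h2n (by linarith)
        calc f n = Z (((n : ℕ) : ℝ) * β) * (((n : ℕ) : ℝ) ^ (-(2 : ℝ)) * ((n : ℕ) : ℝ) ^ (2 - β)) := by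
              simp only [hf]; rw [hre]
          _ ≤ Z 2 * (((n : ℕ) : ℝ) ^ (-(2 : ℝ)) * (2 : ℝ) ^ (2 - β)) := by
              refine mul_le_mul (hZn n) ?_ (by positivity) (Z_nonneg 2)
              exact mul_le_mul_of_nonneg_left hle (term_nonneg n 2)
          _ = Z 2 * (2 : ℝ) ^ (2 - β) * ((n : ℕ) : ℝ) ^ (-(2 : ℝ)) := by ring
    have hsumr : Summable (fun n : {n : ℕ // 1 ≤ n} =>
        Z 2 * (2 : ℝ) ^ (2 - β) * ((n : ℕ) : ℝ) ^ (-(2 : ℝ))) :=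
      (summableZ one_lt_two).mul_left _
    have := Summable.tsum_le_tsum hbd hTsummable hsumr
    rw [hT]
    refine this.trans_eq ?_
    rw [tsum_mul_left]
    have : (∑' n : {n : ℕ // 1 ≤ n}, ((n : ℕ) : ℝ) ^ (-(2 : ℝ))) = Z 2 := rfl
    rw [this]; ring
  -- conclude
  have hquot : (N / ((S : ℝ) : ℂ) - z) = (N - z * ((S : ℝ) : ℂ)) / ((S : ℝ) : ℂ) := by
    field_simp
  calc ‖N / ((S : ℝ) : ℂ) - z‖ = ‖N - z * ((S : ℝ) : ℂ)‖ / ‖((S : ℝ) : ℂ)‖ := by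
        rw [hquot, norm_div]
    _ ≤ ‖N - z * ((S : ℝ) : ℂ)‖ := by
        refine div_le_self (norm_nonneg _) ?_
        rw [Complex.norm_real, Real.norm_eq_abs, abs_of_nonneg (by linarith)]
        exact hS1
    _ ≤ 2 * T := hnormdiff
    _ ≤ 2 * (Z 2 * Z 2 * (2 : ℝ) ^ (2 - β)) := by linarith
end
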